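/- Let d ≥ 3, and suppose z₁,…,z_m ∈ L·Z^d have mutual ℓ∞-distance at least L̄ = (2K+1)L, with all boxes C_{z_i} = z_i + [0,L)^d contained in a box of ℓ∞-radius ⌊C m^{1/d} L⌋. Then for every x in U = ∪_i C_{z_i}, Σ_{y∈U} g(x,y) ≤ C' · m^{2/d} · L², where g is the Green's function of simple random walk on Z^d and C' depends only on d, K, C. -/

import Mathlib

open scoped BigOperators Classical

noncomputable section

/-- The lattice `ℤ^d`. -/
abbrev Zd (d : ℕ) := Fin d → ℤ

/-- The `i`-th unit vector of `ℤ^d`. -/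
def unitVec (d : ℕ) (i : Fin d) : Zd d := fun j => if j = i then 1 else 0

/-- Number of nearest-neighbour walks `X₀ = x, X₁, …, Xₙ = y` of length `n` from `x` to `y`
with all of `X₁, …, Xₙ` lying in the set `A` (the starting point is unconstrained). -/
def walksIn (d : ℕ) (A : Set (Zd d)) : ℕ → Zd d → Zd d → ℕ
  | 0, x, y => if x = y then 1 else 0
  | n + 1, x, y =>
      if y ∈ A then
        ∑ i : Fin d, (walksIn d A n x (y + unitVec d i) + walksIn d A n x (y - unitVec d i))
      else 0

/-- The ℓ∞-box of radius `n` around `x`, containing all possible positions of a walk of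
length `n` started at `x`. -/
def rwBox (d : ℕ) (x : Zd d) (n : ℕ) : Finset (Zd d) :=
  Finset.Icc (fun i => x i - n) (fun i => x i + n)

/-- `P^x[Xₙ = y]` for simple random walk on `ℤ^d`. -/
def pwalk (d : ℕ) (n : ℕ) (x y : Zd d) : ℝ := (walksIn d Set.univ n x y : ℝ) / (2 * d) ^ n

/-- The Green's function `g(x,y) = ∑ₙ P^x[Xₙ = y]` of simple random walk on `ℤ^d`. -/
def green (d : ℕ) (x y : Zd d) : ℝ := ∑' n : ℕ, pwalk d n x y

/-- `P^x[H_K > n]`: the probability that the walk started at `x` avoids `K` at all times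
`1, …, n`. -/
def survProb (d : ℕ) (K : Set (Zd d)) (x : Zd d) (n : ℕ) : ℝ :=
  (∑ y ∈ rwBox d x n, (walksIn d Kᶜ n x y : ℝ)) / (2 * d) ^ n

/-- The equilibrium measure `e_K(x) = P^x[H_K = ∞] = inf_n P^x[H_K > n]`
(the survival probabilities being nonincreasing in `n`). -/
def equilib (d : ℕ) (K : Set (Zd d)) (x : Zd d) : ℝ := ⨅ n : ℕ, survProb d K x n

/-- The capacity `Cap(K) = ∑_{x ∈ K} e_K(x)` of a finite set `K ⊂ ℤ^d`. -/
def cap (d : ℕ) (K : Finset (Zd d)) : ℝ := ∑ x ∈ K, equilib d (↑K) x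

/-- The number of walks of length `n` started at `x` with `X₁, …, X_{n-1} ∈ U \ K`,
`Xₙ ∉ U` and `Xₙ ∉ K`; i.e. realizations of the event `{H_K > T_U, T_U = n}`. -/
def exitCount (d : ℕ) (K U : Set (Zd d)) (x : Zd d) : ℕ → ℕ
  | 0 => if x ∈ U then 0 else 1
  | n + 1 =>
      ∑ y ∈ rwBox d x (n + 1),
        if y ∉ U ∧ y ∉ K then
          ∑ i : Fin d,
            (walksIn d (U \ K) n x (y + unitVec d i) + walksIn d (U \ K) n x (y - unitVec d i))
        else 0

/-- The equilibrium measure of `K` relative to `U`: `e_{K,U}(x) = P^x[H_K > T_U]`. -/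
def equilibRel (d : ℕ) (K U : Set (Zd d)) (x : Zd d) : ℝ :=
  ∑' n : ℕ, (exitCount d K U x n : ℝ) / (2 * d) ^ n

/-- The capacity of `K` relative to `U`: `Cap_U(K) = ∑_{x ∈ K} e_{K,U}(x)`. -/
def capRel (d : ℕ) (U : Set (Zd d)) (K : Finset (Zd d)) : ℝ :=
  ∑ x ∈ K, equilibRel d (↑K) U x

end

/-- The ℓ∞ norm on `ℤ^d` (as a natural number). -/
def normInf (d : ℕ) (x : Zd d) : ℕ := Finset.univ.sup fun i => (x i).natAbs

/-- The box `C_z = z + [0,L)^d ∩ ℤ^d`. -/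
noncomputable def boxC (d : ℕ) (z : Zd d) (L : ℕ) : Finset (Zd d) :=
  Finset.Icc z (fun i => z i + L - 1)

noncomputable section

namespace GreenAux
open Finset

variable (d : ℕ)

abbrev B (d : ℕ) := Fin d × Bool

def step (p : B d) : Zd d := if p.2 then unitVec d p.1 else - unitVec d p.1

def sSum {n : ℕ} (s : Fin n → B d) : Zd d := ∑ k, step d (s k)

def W (n : ℕ) (v : Zd d) : ℕ := Fintype.card {s : Fin n → B d // sSum d s = v}

lemma sSum_zero (s : Fin 0 → B d) : sSum d s = 0 := by
  simp [sSum]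

lemma sSum_cons {n : ℕ} (p : B d) (t : Fin n → B d) :
    sSum d (Fin.cons p t) = step d p + sSum d t := by
  simp [sSum, Fin.sum_univ_succ]

lemma W_zero (v : Zd d) : W d 0 v = if v = 0 then 1 else 0 := by
  rcases eq_or_ne v 0 with rfl | hv
  · rw [if_pos rfl]
    refine Fintype.card_eq_one_iff.2 ⟨⟨finZeroElim, sSum_zero d _⟩, ?_⟩
    rintro ⟨s, hs⟩
    exact Subtype.ext (funext fun k => k.elim0)
  · rw [if_neg hv]
    refine Fintype.card_eq_zero_iff.2 ⟨fun s => hv ?_⟩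
    rw [← s.2, sSum_zero]

def succEquiv (n : ℕ) (v : Zd d) :
    {s : Fin (n+1) → B d // sSum d s = v}
      ≃ Σ p : B d, {t : Fin n → B d // sSum d t = v - step d p} where
  toFun s := ⟨s.1 0, ⟨Fin.tail s.1, by
    have := s.2
    rw [← Fin.cons_self_tail s.1, sSum_cons] at this
    exact eq_sub_of_add_eq' this⟩⟩
  invFun q := ⟨Fin.cons q.1 q.2.1, by rw [sSum_cons, q.2.2]; abel⟩
  left_inv := by
    rintro ⟨s, hs⟩
    simp [Fin.cons_self_tail]
  right_inv := by
    rintro ⟨p, t, ht⟩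
    simp [Fin.cons_zero, Fin.tail_cons]
    rfl

lemma W_succ (n : ℕ) (v : Zd d) :
    W d (n + 1) v = ∑ p : B d, W d n (v - step d p) := by
  have h : W d (n + 1) v
      = Fintype.card (Σ p : B d, {t : Fin n → B d // sSum d t = v - step d p}) :=
    Fintype.card_congr (succEquiv d n v)
  rw [h, Fintype.card_sigma]
  rfl

lemma walksIn_eq (n : ℕ) (x y : Zd d) :
    walksIn d Set.univ n x y = W d n (y - x) := by
  induction n generalizing y with
  | zero =>
      rw [walksIn, W_zero]
      by_cases h : x = y
      · rw [if_pos h, if_pos (by rw [h, sub_self])]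
      · rw [if_neg h, if_neg (by rw [sub_eq_zero]; exact fun hh => h hh.symm)]
  | succ n ih =>
      rw [walksIn, if_pos (Set.mem_univ _), W_succ]
      rw [Fintype.sum_prod_type]
      refine Finset.sum_congr rfl fun i _ => ?_
      rw [Fintype.sum_bool]
      have h1 : step d (i, true) = unitVec d i := by simp [step]
      have h2 : step d (i, false) = - unitVec d i := by simp [step]
      rw [h1, h2, ih, ih, sub_neg_eq_add]
      have e1 : y + unitVec d i - x = y - x + unitVec d i := by abel
      have e2 : y - unitVec d i - x = y - x - unitVec d i := by abel
      rw [e1, e2, add_comm]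

lemma W_eq_filter (n : ℕ) (v : Zd d) :
    W d n v = ((univ : Finset (Fin n → B d)).filter (fun s => sSum d s = v)).card := by
  rw [W, Fintype.card_subtype]

lemma card_fun (n : ℕ) : Fintype.card (Fin n → B d) = (2 * d) ^ n := by
  rw [Fintype.card_fun, Fintype.card_prod, Fintype.card_fin, Fintype.card_bool, Fintype.card_fin,
    mul_comm]

lemma W_sum_le (n : ℕ) (T : Finset (Zd d)) :
    ∑ v ∈ T, W d n v ≤ (2 * d) ^ n := by
  classical
  have h1 : ∀ v ∈ T, ((univ : Finset (Fin n → B d)).filter (fun s => sSum d s = v)).card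
      = (((univ : Finset (Fin n → B d)).filter (fun s => sSum d s ∈ T)).filter
        (fun s => sSum d s = v)).card := by
    intro v hv
    congr 1
    ext s
    simp only [mem_filter, mem_univ, true_and]
    constructor
    · intro h; exact ⟨h ▸ hv, h⟩
    · tauto
  calc ∑ v ∈ T, W d n v
      = ∑ v ∈ T, (((univ : Finset (Fin n → B d)).filter (fun s => sSum d s ∈ T)).filter
        (fun s => sSum d s = v)).card := by
        refine Finset.sum_congr rfl fun v hv => ?_
        rw [W_eq_filter, h1 v hv]
    _ = ((univ : Finset (Fin n → B d)).filter (fun s => sSum d s ∈ T)).card := by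
        rw [← Finset.card_eq_sum_card_fiberwise (s := (univ : Finset (Fin n → B d)).filter (fun s => sSum d s ∈ T)) (t := T) (fun s hs => (Finset.mem_filter.1 hs).2)]
    _ ≤ (univ : Finset (Fin n → B d)).card := Finset.card_filter_le _ _
    _ = (2 * d) ^ n := by rw [Finset.card_univ, card_fun]

def flipB : B d ≃ B d :=
  Equiv.prodCongr (Equiv.refl _) ⟨Bool.not, Bool.not, Bool.not_not, Bool.not_not⟩

lemma step_flip (p : B d) : step d (flipB d p) = - step d p := by
  rcases p with ⟨i, b⟩
  cases b <;> simp [flipB, step]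

lemma W_symm (n : ℕ) (v : Zd d) : W d n v = W d n (-v) := by
  refine Fintype.card_congr (Equiv.subtypeEquiv (Equiv.piCongrRight fun _ => flipB d) ?_)
  intro s
  have h : sSum d (fun k => flipB d (s k)) = - sSum d s := by
    show ∑ k, step d (flipB d (s k)) = - sSum d s
    simp only [step_flip]
    rw [Finset.sum_neg_distrib]
    rfl
  constructor
  · intro hs
    show sSum d (fun k => flipB d (s k)) = -v
    rw [h, hs]
  · intro hs
    have : sSum d (fun k => flipB d (s k)) = -v := hs
    rw [h] at this
    exact neg_injective this

def funSplit (a b : ℕ) : (Fin (a+b) → B d) ≃ (Fin a → B d) × (Fin b → B d) where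
  toFun s := (fun k => s (Fin.castAdd b k), fun k => s (Fin.natAdd a k))
  invFun q := Fin.append q.1 q.2
  left_inv s := funext fun k => Fin.addCases
    (fun i => by simp [Fin.append_left]) (fun i => by simp [Fin.append_right]) k
  right_inv q := by
    rcases q with ⟨s₁, s₂⟩
    simp only [Prod.mk.injEq]
    constructor <;> funext k
    · simp [Fin.append_left]
    · simp [Fin.append_right]

lemma sSum_split {a b : ℕ} (s : Fin (a+b) → B d) :
    sSum d s = sSum d ((funSplit d a b) s).1 + sSum d ((funSplit d a b) s).2 := by
  rw [sSum, Fin.sum_univ_add]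
  rfl

def appendEquiv (a b : ℕ) (v : Zd d) :
    {s : Fin (a + b) → B d // sSum d s = v}
      ≃ Σ s₁ : Fin a → B d, {s₂ : Fin b → B d // sSum d s₂ = v - sSum d s₁} :=
  (Equiv.subtypeEquiv (funSplit d a b) (fun s => by
      rw [sSum_split d s]
      exact ⟨fun h => eq_sub_of_add_eq' h, fun h => by rw [h]; abel⟩)).trans
    (Equiv.subtypeProdEquivSigmaSubtype (fun s₁ s₂ => sSum d s₂ = v - sSum d s₁))

lemma W_conv (a b : ℕ) (v : Zd d) :
    W d (a + b) v = ∑ s₁ : Fin a → B d, W d b (v - sSum d s₁) := by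
  have h : W d (a + b) v = Fintype.card
      (Σ s₁ : Fin a → B d, {s₂ : Fin b → B d // sSum d s₂ = v - sSum d s₁}) :=
    Fintype.card_congr (appendEquiv d a b v)
  rw [h, Fintype.card_sigma]
  rfl

def suppW (n : ℕ) : Finset (Zd d) := (univ : Finset (Fin n → B d)).image (sSum d)

lemma mem_suppW_of_ne {n : ℕ} {v : Zd d} (h : W d n v ≠ 0) : v ∈ suppW d n := by
  rw [W_eq_filter] at h
  obtain ⟨s, hs⟩ := Finset.card_pos.1 (Nat.pos_of_ne_zero h)
  rw [Finset.mem_filter] at hs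
  exact Finset.mem_image.2 ⟨s, Finset.mem_univ _, hs.2⟩

lemma W_grouped (n : ℕ) (v : Zd d) :
    W d (n + n) v = ∑ u ∈ suppW d n, W d n u * W d n (v - u) := by
  rw [W_conv]
  rw [← Finset.sum_fiberwise_of_maps_to (fun s (_ : s ∈ univ) => Finset.mem_image_of_mem (sSum d) (Finset.mem_univ s))
    (fun s₁ => W d n (v - sSum d s₁))]
  refine Finset.sum_congr rfl fun u hu => ?_
  have : ∀ s₁ ∈ (univ : Finset (Fin n → B d)).filter (fun s => sSum d s = u),
      W d n (v - sSum d s₁) = W d n (v - u) := by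
    intro s₁ hs₁
    rw [(Finset.mem_filter.1 hs₁).2]
  rw [Finset.sum_congr rfl this, Finset.sum_const, ← W_eq_filter, smul_eq_mul]

lemma sum_sq_le (n : ℕ) (T : Finset (Zd d)) :
    ∑ w ∈ T, (W d n w : ℝ)^2 ≤ ∑ w ∈ suppW d n, (W d n w : ℝ)^2 := by
  classical
  rw [← Finset.sum_filter_ne_zero T]
  refine Finset.sum_le_sum_of_subset_of_nonneg ?_ (fun w _ _ => sq_nonneg _)
  intro w hw
  rw [Finset.mem_filter] at hw
  refine mem_suppW_of_ne d ?_
  intro h0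
  exact hw.2 (by rw [h0]; norm_num)

lemma W_diag_eq (n : ℕ) :
    (W d (n + n) 0 : ℝ) = ∑ u ∈ suppW d n, (W d n u : ℝ)^2 := by
  rw [W_grouped]
  push_cast
  refine Finset.sum_congr rfl fun u _ => ?_
  rw [zero_sub, ← W_symm, sq]

lemma W_even_max (n : ℕ) (v : Zd d) :
    (W d (n + n) v : ℝ) ≤ (W d (n + n) 0 : ℝ) := by
  have hv : (W d (n + n) v : ℝ) = ∑ u ∈ suppW d n, (W d n u : ℝ) * (W d n (v - u) : ℝ) := by
    rw [W_grouped]; push_cast; rfl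
  have hcs := Finset.sum_mul_sq_le_sq_mul_sq (suppW d n)
    (fun u => (W d n u : ℝ)) (fun u => (W d n (v - u) : ℝ))
  have himg : ∑ u ∈ suppW d n, (W d n (v - u) : ℝ)^2 ≤ ∑ w ∈ suppW d n, (W d n w : ℝ)^2 := by
    have : ∑ u ∈ suppW d n, (W d n (v - u) : ℝ)^2
        = ∑ w ∈ (suppW d n).image (fun u => v - u), (W d n w : ℝ)^2 := by
      rw [Finset.sum_image (fun u _ u' _ h => by
        have := congrArg (fun t => v - t) h
        simpa using this)]
    rw [this]
    exact sum_sq_le d n _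
  have h0 := W_diag_eq d n
  have hWnonneg : (0:ℝ) ≤ (W d (n+n) v : ℝ) := Nat.cast_nonneg _
  have h0nonneg : (0:ℝ) ≤ (W d (n+n) 0 : ℝ) := Nat.cast_nonneg _
  nlinarith [hcs, himg, hv, h0]

lemma W_odd_le (n : ℕ) (v : Zd d) :
    (W d (1 + (n + n)) v : ℝ) ≤ 2 * d * (W d (n + n) 0 : ℝ) := by
  rw [W_conv]
  push_cast
  calc ∑ s₁ : Fin 1 → B d, (W d (n+n) (v - sSum d s₁) : ℝ)
      ≤ ∑ _s₁ : Fin 1 → B d, (W d (n+n) 0 : ℝ) :=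
        Finset.sum_le_sum fun s₁ _ => W_even_max d n _
    _ = (Fintype.card (Fin 1 → B d) : ℝ) * (W d (n+n) 0 : ℝ) := by
        rw [Finset.sum_const, Finset.card_univ, nsmul_eq_mul]
    _ = 2 * d * (W d (n + n) 0 : ℝ) := by
        rw [card_fun, pow_one]; push_cast; ring

/-! ### central binomial bounds -/

lemma cb_sq (m : ℕ) : (Nat.centralBinom m)^2 * (m+1) ≤ 16^m := by
  induction m with
  | zero => simp [Nat.centralBinom_zero]
  | succ m ih =>
      have key := Nat.succ_mul_centralBinom_succ m
      have hpos : 0 < (m+1)^3 := by positivity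
      refine Nat.le_of_mul_le_mul_left ?_ hpos
      have h1 : (m+1)^3 * ((Nat.centralBinom (m+1))^2 * (m+1+1))
          = ((m+1) * Nat.centralBinom (m+1))^2 * ((m+2)*(m+1)) := by ring
      rw [h1, key]
      have h2 : (2*(2*m+1)*Nat.centralBinom m)^2 * ((m+2)*(m+1))
          = (4*(2*m+1)^2*(m+2)) * ((Nat.centralBinom m)^2 * (m+1)) := by ring
      rw [h2]
      calc (4*(2*m+1)^2*(m+2)) * ((Nat.centralBinom m)^2 * (m+1))
          ≤ (4*(2*m+1)^2*(m+2)) * 16^m := Nat.mul_le_mul_left _ ih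
        _ ≤ (16*(m+1)^3) * 16^m := Nat.mul_le_mul_right _ (by nlinarith)
        _ = (m+1)^3 * 16^(m+1) := by ring

def bb (m : ℕ) : ℕ := Nat.choose m (m/2)

lemma bb_sq (m : ℕ) : (bb m)^2 * (m+1) ≤ 2 * 4^m := by
  rcases Nat.even_or_odd m with ⟨a, rfl⟩ | ⟨a, rfl⟩
  · have hhalf : (a + a)/2 = a := by omega
    have hbb : bb (a+a) = Nat.centralBinom a := by
      rw [bb, hhalf, Nat.centralBinom, two_mul]
    rw [hbb]
    have h16 : 16^a = 4^(a+a) := by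
      rw [show (16:ℕ) = 4^2 by norm_num, ← pow_mul]
      congr 1; omega
    calc (Nat.centralBinom a)^2 * (a+a+1)
        ≤ (Nat.centralBinom a)^2 * (2*(a+1)) := Nat.mul_le_mul_left _ (by omega)
      _ = 2 * ((Nat.centralBinom a)^2 * (a+1)) := by ring
      _ ≤ 2 * 16^a := Nat.mul_le_mul_left _ (cb_sq a)
      _ = 2 * 4^(a+a) := by rw [h16]
  · have hhalf : (2*a + 1)/2 = a := by omega
    have hbb : bb (2*a+1) = Nat.choose (2*a+1) a := by rw [bb, hhalf]
    rw [hbb]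
    have hsymm : Nat.choose (2*a+1) (a+1) = Nat.choose (2*a+1) a := by
      have := Nat.choose_symm (n := 2*a+1) (k := a+1) (by omega)
      simpa [show 2*a+1 - (a+1) = a by omega] using this.symm
    have hdouble : 2 * Nat.choose (2*a+1) a = Nat.centralBinom (a+1) := by
      rw [Nat.centralBinom, show 2*(a+1) = (2*a+1)+1 by ring]
      rw [Nat.choose_succ_succ, hsymm]
      ring
    refine Nat.le_of_mul_le_mul_left ?_ (show 0 < 4 by norm_num)
    have h1 : 4 * ((Nat.choose (2*a+1) a)^2 * (2*a+1+1))
        = (2*Nat.choose (2*a+1) a)^2 * (2*a+2) := by ring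
    rw [h1, hdouble]
    have h2 : (Nat.centralBinom (a+1))^2 * (2*a+2)
        = 2 * ((Nat.centralBinom (a+1))^2 * (a+1)) := by ring
    rw [h2]
    calc 2 * ((Nat.centralBinom (a+1))^2 * (a+1))
        ≤ 2 * ((Nat.centralBinom (a+1))^2 * (a+1+1)) :=
          Nat.mul_le_mul_left _ (Nat.mul_le_mul_left _ (by omega))
      _ ≤ 2 * 16^(a+1) := Nat.mul_le_mul_left _ (cb_sq (a+1))
      _ = 4 * (2 * 4^(2*a+1)) := by
          rw [show (16:ℕ) = 4^2 by norm_num, ← pow_mul]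
          ring_nf

/-! ### factorial products -/

def PP (D a : ℕ) : ℕ := ∏ t ∈ Finset.range D, (a + 1 + t)

lemma fact_PP (D a : ℕ) : (a + D).factorial = a.factorial * PP D a := by
  induction D with
  | zero => simp [PP]
  | succ D ih =>
      rw [show a + (D+1) = (a + D) + 1 by ring, Nat.factorial_succ, ih]
      simp only [PP, Finset.prod_range_succ]
      ring

lemma PP_pos (D a : ℕ) : 0 < PP D a := by
  refine Finset.prod_pos fun t _ => by omega

lemma choose_shift (D N k : ℕ) (hk : k ≤ N) :
    Nat.choose N k * PP D N = Nat.choose (N + D) (k + D) * PP D k := by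
  have hpos : 0 < k.factorial * (N - k).factorial := by
    positivity
  refine Nat.eq_of_mul_eq_mul_right hpos ?_
  have h1 : Nat.choose N k * PP D N * (k.factorial * (N-k).factorial)
      = (Nat.choose N k * k.factorial * (N-k).factorial) * PP D N := by ring
  have h2 : Nat.choose (N+D) (k+D) * PP D k * (k.factorial * (N-k).factorial)
      = Nat.choose (N+D) (k+D) * (k.factorial * PP D k) * (N-k).factorial := by ring
  have h3 : Nat.choose (N+D) (k+D) * (k+D).factorial * ((N+D)-(k+D)).factorial
      = (N+D).factorial := Nat.choose_mul_factorial_mul_factorial (by omega)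
  rw [show (N+D)-(k+D) = N-k by omega] at h3
  rw [h1, h2, Nat.choose_mul_factorial_mul_factorial hk, ← fact_PP, ← fact_PP]
  exact h3.symm

lemma PP_lower (D a : ℕ) : (a+1)^D ≤ PP D a := by
  rw [PP]
  calc (a+1)^D = ∏ _t ∈ Finset.range D, (a+1) := by rw [Finset.prod_const, Finset.card_range]
    _ ≤ ∏ t ∈ Finset.range D, (a+1+t) := Finset.prod_le_prod' fun t _ => by omega

lemma PP_upper (D a : ℕ) (hD : 1 ≤ D) : PP D a ≤ D^D * (a+1)^D := by
  rw [PP]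
  calc ∏ t ∈ Finset.range D, (a+1+t)
      ≤ ∏ _t ∈ Finset.range D, D*(a+1) := by
        refine Finset.prod_le_prod' fun t ht => ?_
        have := Finset.mem_range.1 ht
        nlinarith
    _ = D^D * (a+1)^D := by rw [Finset.prod_const, Finset.card_range, mul_pow]

/-! ### fiber counts and the binomial transform -/

def kfib {N : ℕ} (c : Fin N → Fin d) (j : Fin d) : ℕ :=
  (univ.filter (fun t => c t = j)).card

lemma kfib_cons {N : ℕ} (i : Fin d) (c' : Fin N → Fin d) (j : Fin d) :
    kfib d (Fin.cons i c') j = (if i = j then 1 else 0) + kfib d c' j := by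
  rw [kfib, Finset.card_filter, Fin.sum_univ_succ, kfib, Finset.card_filter]
  simp [Fin.cons_zero, Fin.cons_succ]

lemma pascal_sum (e N : ℕ) (g : ℕ → ℝ) :
    ∑ k ∈ Finset.range (N+1), ((Nat.choose N k * e^(N-k) : ℕ):ℝ) * g (k+1)
      + (e:ℝ) * ∑ k ∈ Finset.range (N+1), ((Nat.choose N k * e^(N-k) : ℕ):ℝ) * g k
    = ∑ k ∈ Finset.range (N+2), ((Nat.choose (N+1) k * e^(N+1-k) : ℕ):ℝ) * g k := by
  rw [Finset.sum_range_succ' (fun k => ((Nat.choose (N+1) k * e^(N+1-k) : ℕ):ℝ) * g k) (N+1)]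
  have hsplit : ∀ k ∈ Finset.range (N+1),
      ((Nat.choose (N+1) (k+1) * e^(N+1-(k+1)) : ℕ):ℝ) * g (k+1)
        = ((Nat.choose N k * e^(N-k) : ℕ):ℝ) * g (k+1)
          + ((Nat.choose N (k+1) * e^(N-k) : ℕ):ℝ) * g (k+1) := by
    intro k hk
    rw [show N+1-(k+1) = N-k by omega, Nat.choose_succ_succ]
    push_cast
    ring
  rw [Finset.sum_congr rfl hsplit, Finset.sum_add_distrib]
  have h2 : ∑ k ∈ Finset.range (N+1), ((Nat.choose N (k+1) * e^(N-k) : ℕ):ℝ) * g (k+1)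
      = ∑ k ∈ Finset.range N, ((Nat.choose N (k+1) * e^(N-k) : ℕ):ℝ) * g (k+1) := by
    rw [Finset.sum_range_succ]
    simp [Nat.choose_succ_self]
  have h3 : (e:ℝ) * ∑ k ∈ Finset.range (N+1), ((Nat.choose N k * e^(N-k) : ℕ):ℝ) * g k
      = ∑ k ∈ Finset.range N, ((Nat.choose N (k+1) * e^(N-k) : ℕ):ℝ) * g (k+1)
        + ((Nat.choose (N+1) 0 * e^(N+1-0) : ℕ):ℝ) * g 0 := by
    rw [Finset.sum_range_succ' (fun k => ((Nat.choose N k * e^(N-k) : ℕ):ℝ) * g k) N]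
    rw [mul_add, Finset.mul_sum]
    congr 1
    · refine Finset.sum_congr rfl fun k hk => ?_
      have hkN : k < N := Finset.mem_range.1 hk
      rw [show N-k = (N-(k+1))+1 by omega]
      push_cast [pow_succ]
      ring
    · simp only [Nat.choose_zero_right, Nat.choose_self, one_mul, Nat.sub_zero]
      push_cast
      ring
  rw [h2, h3]
  ring

lemma sum_if_fin (hd1 : 1 ≤ d) (j : Fin d) (A Bv : ℝ) :
    ∑ i : Fin d, (if i = j then A else Bv) = A + (((d - 1 : ℕ)):ℝ) * Bv := by
  have h : ∀ i : Fin d, (if i = j then A else Bv) = Bv + (if i = j then A - Bv else 0) := by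
    intro i; split <;> ring
  rw [Finset.sum_congr rfl fun i _ => h i, Finset.sum_add_distrib, Finset.sum_const,
    Finset.sum_ite_eq' univ j (fun _ => A - Bv), if_pos (Finset.mem_univ j),
    Finset.card_univ, Fintype.card_fin]
  have : ((d - 1 : ℕ):ℝ) = (d:ℝ) - 1 := by
    push_cast [Nat.cast_sub hd1]
    ring
  rw [this, nsmul_eq_mul]
  ring

lemma TB (hd1 : 1 ≤ d) (j : Fin d) : ∀ (N : ℕ) (g : ℕ → ℝ),
    ∑ c : Fin N → Fin d, g (kfib d c j)
      = ∑ k ∈ Finset.range (N+1), ((Nat.choose N k * (d-1)^(N-k) : ℕ):ℝ) * g k := by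
  intro N
  induction N with
  | zero =>
      intro g
      rw [Fintype.sum_unique]
      simp [kfib]
  | succ N ih =>
      intro g
      rw [← Equiv.sum_comp (Fin.consEquiv (fun _ : Fin (N+1) => Fin d))
        (fun c => g (kfib d c j))]
      have hterm : ∀ p : Fin d × (Fin N → Fin d),
          g (kfib d ((Fin.consEquiv (fun _ : Fin (N+1) => Fin d)) p) j)
            = if p.1 = j then g (kfib d p.2 j + 1) else g (kfib d p.2 j) := by
        rintro ⟨i, c'⟩
        have he : (Fin.consEquiv (fun _ : Fin (N+1) => Fin d)) (i, c') = Fin.cons i c' :=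
          funext fun t => Fin.consEquiv_apply _ _ t
        rw [he, kfib_cons]
        by_cases hij : i = j
        · rw [if_pos hij, if_pos hij, add_comm]
        · rw [if_neg hij, if_neg hij, zero_add]
      rw [Fintype.sum_congr _ _ hterm, Fintype.sum_prod_type]
      have hin : ∀ i : Fin d,
          (∑ c' : Fin N → Fin d, if i = j then g (kfib d c' j + 1) else g (kfib d c' j))
            = if i = j then (∑ c' : Fin N → Fin d, g (kfib d c' j + 1))
              else (∑ c' : Fin N → Fin d, g (kfib d c' j)) := by
        intro i
        split <;> rfl
      rw [Finset.sum_congr rfl fun i _ => hin i, sum_if_fin d hd1 j,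
        ih (fun k => g (k+1)), ih g]
      exact pascal_sum (d-1) N g

/-! ### decomposition of loop counts -/

def Bal {N : ℕ} (c : Fin N → Fin d) (σ : Fin N → Bool) : Prop :=
  ∀ j : Fin d, ((univ : Finset (Fin N)).filter fun t => c t = j ∧ σ t = true).card
    = ((univ : Finset (Fin N)).filter fun t => c t = j ∧ σ t = false).card

lemma step_apply (p : B d) (j : Fin d) :
    step d p j = (if p.1 = j ∧ p.2 = true then (1:ℤ) else 0)
      - (if p.1 = j ∧ p.2 = false then (1:ℤ) else 0) := by
  rcases p with ⟨i, b⟩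
  cases b <;> by_cases hij : i = j <;>
      simp [step, unitVec, hij, eq_comm] <;>
    exact fun h => hij h.symm

lemma sSum_apply_eq {N : ℕ} (s : Fin N → B d) (j : Fin d) :
    sSum d s j = (((univ : Finset (Fin N)).filter fun t => (s t).1 = j ∧ (s t).2 = true).card : ℤ)
      - (((univ : Finset (Fin N)).filter fun t => (s t).1 = j ∧ (s t).2 = false).card : ℤ) := by
  rw [sSum, Finset.sum_apply]
  rw [Finset.sum_congr rfl fun t _ => step_apply d (s t) j, Finset.sum_sub_distrib,
    Finset.sum_boole, Finset.sum_boole]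

lemma W0_le_bal (N : ℕ) :
    W d N 0 ≤ Fintype.card {p : (Fin N → Fin d) × (Fin N → Bool) // Bal d p.1 p.2} := by
  rw [W]
  refine Fintype.card_le_of_injective
    (fun s => ⟨((fun t => (s.1 t).1), (fun t => (s.1 t).2)), ?_⟩) ?_
  · intro j
    have h := congrFun s.2 j
    rw [sSum_apply_eq] at h
    have h0 : ((0 : Zd d) j) = 0 := rfl
    rw [h0, sub_eq_zero] at h
    exact_mod_cast h
  · intro s s' h
    apply Subtype.ext
    funext t
    have h1 := congrArg (fun q : {p : (Fin N → Fin d) × (Fin N → Bool) // Bal d p.1 p.2}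
      => q.1.1 t) h
    have h2 := congrArg (fun q : {p : (Fin N → Fin d) × (Fin N → Bool) // Bal d p.1 p.2}
      => q.1.2 t) h
    exact Prod.ext h1 h2

def Balj {N : ℕ} (c : Fin N → Fin d) (j : Fin d) (τ : {t : Fin N // c t = j} → Bool) : Prop :=
  (univ.filter fun u => τ u = true).card = (univ.filter fun u => τ u = false).card

lemma balanced_card_le {F : Type*} [Fintype F] [DecidableEq F] :
    Fintype.card {τ : F → Bool //
        ((univ : Finset F).filter fun u => τ u = true).card
          = ((univ : Finset F).filter fun u => τ u = false).card}
      ≤ bb (Fintype.card F) := by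
  classical
  have hmem : ∀ τ : {τ : F → Bool //
      ((univ : Finset F).filter fun u => τ u = true).card
        = ((univ : Finset F).filter fun u => τ u = false).card},
      ((univ : Finset F).filter fun u => τ.1 u = true)
        ∈ Finset.powersetCard (Fintype.card F / 2) (univ : Finset F) := by
    intro τ
    rw [Finset.mem_powersetCard]
    refine ⟨Finset.filter_subset _ _, ?_⟩
    have hsum := Finset.card_filter_add_card_filter_not
      (s := (univ : Finset F)) (p := fun u => τ.1 u = true)
    have hneg : ((univ : Finset F).filter fun u => ¬ (τ.1 u = true))
        = ((univ : Finset F).filter fun u => τ.1 u = false) := by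
      refine Finset.filter_congr fun u _ => by simp
    rw [hneg, ← τ.2, Finset.card_univ] at hsum
    omega
  have hcard : Fintype.card
      ↥(Finset.powersetCard (Fintype.card F / 2) (univ : Finset F)) = bb (Fintype.card F) := by
    rw [Fintype.card_coe, Finset.card_powersetCard, Finset.card_univ, bb]
  rw [← hcard]
  refine Fintype.card_le_of_injective (fun τ => ⟨_, hmem τ⟩) ?_
  intro τ τ' h
  have h' : ((univ : Finset F).filter fun v => τ.1 v = true)
      = ((univ : Finset F).filter fun v => τ'.1 v = true) := congrArg Subtype.val h
  apply Subtype.ext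
  funext u
  have hmem2 : u ∈ ((univ : Finset F).filter fun v => τ.1 v = true)
      ↔ u ∈ ((univ : Finset F).filter fun v => τ'.1 v = true) := by rw [h']
  simp only [Finset.mem_filter, Finset.mem_univ, true_and] at hmem2
  cases hτ : τ.1 u <;> cases hτ' : τ'.1 u
  · rfl
  · exact absurd (hmem2.2 hτ') (by rw [hτ]; simp)
  · exact absurd (hmem2.1 hτ) (by rw [hτ']; simp)
  · rfl

set_option maxHeartbeats 1000000 in
lemma bal_card_le {N : ℕ} (c : Fin N → Fin d) :
    Fintype.card {σ : Fin N → Bool // Bal d c σ} ≤ ∏ j : Fin d, bb (kfib d c j) := by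
  classical
  let F : (Fin N → Bool) ≃ ∀ j : Fin d, ({t : Fin N // c t = j} → Bool) :=
    (Equiv.arrowCongr (Equiv.sigmaFiberEquiv c).symm (Equiv.refl Bool)).trans
      (Equiv.piCurry fun _ _ => Bool)
  have hbridge : ∀ (σ : Fin N → Bool) (j : Fin d) (b : Bool),
      ((univ : Finset {t : Fin N // c t = j}).filter fun u => σ u.1 = b).card
        = ((univ : Finset (Fin N)).filter fun t => c t = j ∧ σ t = b).card := by
    intro σ j b
    rw [← Fintype.card_subtype, ← Fintype.card_subtype]
    exact Fintype.card_congr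
      (Equiv.subtypeSubtypeEquivSubtypeInter (fun t => c t = j) (fun t => σ t = b))
  have hiff : ∀ σ : Fin N → Bool, Bal d c σ ↔ ∀ j, Balj d c j (F σ j) := by
    intro σ
    constructor
    · intro hb j
      show ((univ : Finset {t : Fin N // c t = j}).filter fun u => σ u.1 = true).card
        = ((univ : Finset {t : Fin N // c t = j}).filter fun u => σ u.1 = false).card
      rw [hbridge σ j true, hbridge σ j false]
      exact hb j
    · intro hb j
      have h' : ((univ : Finset {t : Fin N // c t = j}).filter fun u => σ u.1 = true).card
          = ((univ : Finset {t : Fin N // c t = j}).filter fun u => σ u.1 = false).card := hb j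
      rw [hbridge σ j true, hbridge σ j false] at h'
      exact h'
  calc Fintype.card {σ : Fin N → Bool // Bal d c σ}
      = Fintype.card {f : ∀ j : Fin d, ({t : Fin N // c t = j} → Bool) //
          ∀ j, Balj d c j (f j)} := Fintype.card_congr (Equiv.subtypeEquiv F hiff)
    _ = Fintype.card (∀ j : Fin d, {τ : {t : Fin N // c t = j} → Bool // Balj d c j τ}) :=
        Fintype.card_congr (Equiv.subtypePiEquivPi)
    _ = ∏ j : Fin d, Fintype.card {τ : {t : Fin N // c t = j} → Bool // Balj d c j τ} :=
        Fintype.card_pi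
    _ ≤ ∏ j : Fin d, bb (kfib d c j) := by
        refine Finset.prod_le_prod' fun j _ => ?_
        have h := balanced_card_le (F := {t : Fin N // c t = j})
        have hcard : Fintype.card {t : Fin N // c t = j} = kfib d c j :=
          Fintype.card_subtype _
        rw [hcard] at h
        calc Fintype.card {τ : {t : Fin N // c t = j} → Bool // Balj d c j τ}
            = Fintype.card {τ : {t : Fin N // c t = j} → Bool //
                ((univ : Finset {t : Fin N // c t = j}).filter fun u => τ u = true).card
                  = ((univ : Finset {t : Fin N // c t = j}).filter
                    fun u => τ u = false).card} :=
              Fintype.card_congr (Equiv.subtypeEquivRight fun τ => Iff.rfl)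
          _ ≤ bb (kfib d c j) := h

lemma W0_le_prod (N : ℕ) :
    W d N 0 ≤ ∑ c : Fin N → Fin d, ∏ j : Fin d, bb (kfib d c j) := by
  calc W d N 0 ≤ Fintype.card {p : (Fin N → Fin d) × (Fin N → Bool) // Bal d p.1 p.2} :=
      W0_le_bal d N
    _ = ∑ c : Fin N → Fin d, Fintype.card {σ : Fin N → Bool // Bal d c σ} := by
      rw [Fintype.card_congr (Equiv.subtypeProdEquivSigmaSubtype (Bal d)), Fintype.card_sigma]
    _ ≤ ∑ c : Fin N → Fin d, ∏ j : Fin d, bb (kfib d c j) :=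
      Finset.sum_le_sum fun c _ => bal_card_le d c

/-! ### the moment bound -/

lemma binom_tail_le (e N D : ℕ) :
    ∑ k ∈ Finset.range (N+1), Nat.choose (N+D) (k+D) * e^(N-k) ≤ (1+e)^(N+D) := by
  have hrw : ∑ k ∈ Finset.range (N+1), Nat.choose (N+D) (k+D) * e^(N-k)
      = ∑ j ∈ (Finset.range (N+1)).image (· + D), Nat.choose (N+D) j * e^(N+D-j) := by
    rw [Finset.sum_image (fun x _ y _ h => by omega)]
    refine Finset.sum_congr rfl fun k hk => ?_
    rw [show N+D-(k+D) = N-k by omega]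
  rw [hrw]
  have hsub : (Finset.range (N+1)).image (· + D) ⊆ Finset.range (N+D+1) := by
    intro j hj
    obtain ⟨k, hk, rfl⟩ := Finset.mem_image.1 hj
    have := Finset.mem_range.1 hk
    exact Finset.mem_range.2 (by omega)
  calc ∑ j ∈ (Finset.range (N+1)).image (· + D), Nat.choose (N+D) j * e^(N+D-j)
      ≤ ∑ j ∈ Finset.range (N+D+1), Nat.choose (N+D) j * e^(N+D-j) :=
        Finset.sum_le_sum_of_subset hsub
    _ = (1+e)^(N+D) := by
        rw [add_pow]
        refine Finset.sum_congr rfl fun j _ => ?_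
        rw [one_pow]
        push_cast
        ring

lemma moment_bound (hd3 : 3 ≤ d) (N : ℕ) :
    ∑ k ∈ Finset.range (N+1), ((Nat.choose N k * (d-1)^(N-k) : ℕ):ℝ) * ((k:ℝ)+1) ^ (-(d:ℝ)/2)
      ≤ (d:ℝ)^(N+d) * ((N:ℝ)+1) ^ (-(d:ℝ)/2) := by
  have hd1 : 1 ≤ d := by omega
  set μ : ℕ → ℝ := fun k => ((Nat.choose N k * (d-1)^(N-k) : ℕ):ℝ) with hμ
  set f : ℕ → ℝ := fun k => ((k:ℝ)+1) ^ (-(d:ℝ)/2) with hf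
  have hμ0 : ∀ k, 0 ≤ μ k := fun k => Nat.cast_nonneg _
  have hf0 : ∀ k, 0 ≤ f k := fun k => Real.rpow_nonneg (by positivity) _
  have hμsum : ∑ k ∈ Finset.range (N+1), μ k = (d:ℝ)^N := by
    have hTB := TB d hd1 ⟨0, by omega⟩ N (fun _ => (1:ℝ))
    simp only [mul_one] at hTB
    rw [← hTB, Finset.sum_const, Finset.card_univ, Fintype.card_fun, Fintype.card_fin,
      Fintype.card_fin, nsmul_eq_mul, mul_one]
    push_cast
    ring
  have hfsq : ∀ k : ℕ, (f k)^2 = (((k:ℝ)+1)^(d:ℕ))⁻¹ := by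
    intro k
    have h1 : (0:ℝ) ≤ (k:ℝ)+1 := by positivity
    rw [hf]
    rw [← Real.rpow_natCast (((k:ℝ)+1) ^ (-(d:ℝ)/2)) 2, ← Real.rpow_mul h1]
    rw [show (-(d:ℝ)/2) * ((2:ℕ):ℝ) = -(d:ℝ) by push_cast; ring]
    rw [Real.rpow_neg h1, Real.rpow_natCast]
  have hPPpos : ∀ a : ℕ, (0:ℝ) < (PP d a : ℝ) := fun a => by
    exact_mod_cast PP_pos d a
  have hfsq_le : ∀ k : ℕ, (f k)^2 ≤ (d:ℝ)^d / (PP d k : ℝ) := by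
    intro k
    rw [hfsq k, inv_eq_one_div, div_le_div_iff₀ (by positivity) (hPPpos k), one_mul]
    calc (PP d k : ℝ) ≤ ((d^d * (k+1)^d : ℕ) : ℝ) := by exact_mod_cast PP_upper d k hd1
      _ = (d:ℝ)^d * ((k:ℝ)+1)^(d:ℕ) := by push_cast; ring
  have hconv : ∑ k ∈ Finset.range (N+1), μ k / (PP d k : ℝ)
      ≤ (d:ℝ)^(N+d) / (PP d N : ℝ) := by
    have hterm : ∀ k ∈ Finset.range (N+1),
        μ k / (PP d k : ℝ)
          = ((Nat.choose (N+d) (k+d) * (d-1)^(N-k) : ℕ):ℝ) / (PP d N : ℝ) := by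
      intro k hk
      have hkN : k ≤ N := by
        have := Finset.mem_range.1 hk; omega
      have hcs : ((Nat.choose N k : ℝ)) * (PP d N : ℝ)
          = (Nat.choose (N+d) (k+d) : ℝ) * (PP d k : ℝ) := by
        exact_mod_cast choose_shift d N k hkN
      rw [hμ, div_eq_div_iff (hPPpos k).ne' (hPPpos N).ne']
      push_cast
      linear_combination (((d-1 : ℕ):ℝ))^(N-k) * hcs
    rw [Finset.sum_congr rfl hterm, ← Finset.sum_div]
    have hnat := binom_tail_le (d-1) N d
    rw [show 1 + (d-1) = d by omega] at hnat
    have hcastle : ∑ k ∈ Finset.range (N+1), ((Nat.choose (N+d) (k+d) * (d-1)^(N-k) : ℕ):ℝ)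
        ≤ (d:ℝ)^(N+d) := by
      rw [← Nat.cast_sum]
      calc ((∑ k ∈ Finset.range (N+1), Nat.choose (N+d) (k+d) * (d-1)^(N-k) : ℕ) : ℝ)
          ≤ ((d^(N+d) : ℕ) : ℝ) := by exact_mod_cast hnat
        _ = (d:ℝ)^(N+d) := by push_cast; ring
    exact div_le_div_of_nonneg_right hcastle (hPPpos N).le
  -- Cauchy–Schwarz
  have hCS := Finset.sum_mul_sq_le_sq_mul_sq (Finset.range (N+1))
    (fun k => Real.sqrt (μ k)) (fun k => Real.sqrt (μ k) * f k)
  have hid : ∀ k ∈ Finset.range (N+1),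
      Real.sqrt (μ k) * (Real.sqrt (μ k) * f k) = μ k * f k := by
    intro k _
    rw [← mul_assoc, Real.mul_self_sqrt (hμ0 k)]
  have hid1 : ∀ k ∈ Finset.range (N+1), (Real.sqrt (μ k))^2 = μ k := by
    intro k _
    exact Real.sq_sqrt (hμ0 k)
  have hid2 : ∀ k ∈ Finset.range (N+1), (Real.sqrt (μ k) * f k)^2 = μ k * (f k)^2 := by
    intro k _
    rw [mul_pow, Real.sq_sqrt (hμ0 k)]
  rw [Finset.sum_congr rfl hid, Finset.sum_congr rfl hid1, Finset.sum_congr rfl hid2] at hCS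
  -- bound the second factor
  have hsecond : ∑ k ∈ Finset.range (N+1), μ k * (f k)^2
      ≤ (d:ℝ)^d * ((d:ℝ)^(N+d) / (PP d N : ℝ)) := by
    calc ∑ k ∈ Finset.range (N+1), μ k * (f k)^2
        ≤ ∑ k ∈ Finset.range (N+1), μ k * ((d:ℝ)^d / (PP d k : ℝ)) :=
          Finset.sum_le_sum fun k _ => mul_le_mul_of_nonneg_left (hfsq_le k) (hμ0 k)
      _ = (d:ℝ)^d * ∑ k ∈ Finset.range (N+1), μ k / (PP d k : ℝ) := by
          rw [Finset.mul_sum]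
          refine Finset.sum_congr rfl fun k _ => by ring
      _ ≤ (d:ℝ)^d * ((d:ℝ)^(N+d) / (PP d N : ℝ)) :=
          mul_le_mul_of_nonneg_left hconv (by positivity)
  have hPPN : (d:ℝ)^(N+d) / (PP d N : ℝ) ≤ (d:ℝ)^(N+d) * (f N)^2 := by
    rw [hfsq N]
    rw [div_eq_mul_inv]
    refine mul_le_mul_of_nonneg_left ?_ (by positivity)
    refine inv_anti₀ (by positivity) ?_
    calc ((N:ℝ)+1)^(d:ℕ) = (((N+1)^d : ℕ):ℝ) := by push_cast; ring
      _ ≤ (PP d N : ℝ) := by exact_mod_cast PP_lower d N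
  set S := ∑ k ∈ Finset.range (N+1), μ k * f k with hS
  have hS0 : 0 ≤ S := Finset.sum_nonneg fun k _ => mul_nonneg (hμ0 k) (hf0 k)
  have hT0 : 0 ≤ (d:ℝ)^(N+d) * f N := by positivity
  have hS2 : S^2 ≤ ((d:ℝ)^(N+d) * f N)^2 := by
    calc S^2 ≤ (∑ k ∈ Finset.range (N+1), μ k) * ∑ k ∈ Finset.range (N+1), μ k * (f k)^2 :=
        hCS
      _ ≤ (d:ℝ)^N * ((d:ℝ)^d * ((d:ℝ)^(N+d) * (f N)^2)) := by
          rw [hμsum]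
          refine mul_le_mul_of_nonneg_left (hsecond.trans ?_) (by positivity)
          exact mul_le_mul_of_nonneg_left hPPN (by positivity)
      _ = ((d:ℝ)^(N+d) * f N)^2 := by
          have hpw : (d:ℝ)^N * (d:ℝ)^d = (d:ℝ)^(N+d) := by rw [← pow_add]
          calc (d:ℝ)^N * ((d:ℝ)^d * ((d:ℝ)^(N+d) * (f N)^2))
              = ((d:ℝ)^N * (d:ℝ)^d) * (d:ℝ)^(N+d) * (f N)^2 := by ring
            _ = ((d:ℝ)^(N+d) * f N)^2 := by rw [hpw]; ring
  show S ≤ (d:ℝ)^(N+d) * ((N:ℝ)+1) ^ (-(d:ℝ)/2)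
  nlinarith [hS2, hS0, hT0]

/-! ### diagonal heat kernel bound -/

lemma kfib_sum {N : ℕ} (c : Fin N → Fin d) : ∑ j : Fin d, kfib d c j = N := by
  have h := Finset.card_eq_sum_card_fiberwise
    (f := c) (s := (univ : Finset (Fin N))) (t := (univ : Finset (Fin d)))
    (fun t _ => Finset.mem_univ (c t))
  rw [Finset.card_univ, Fintype.card_fin] at h
  exact h.symm

lemma prod_bb_le {N : ℕ} (c : Fin N → Fin d) :
    (∏ j : Fin d, (bb (kfib d c j) : ℝ))
      ≤ (2:ℝ)^d * 2^N * ∏ j : Fin d, ((kfib d c j : ℝ)+1) ^ (-(1:ℝ)/2) := by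
  set G := ∏ j : Fin d, ((kfib d c j : ℝ)+1) ^ (-(1:ℝ)/2) with hG
  have hGpos : 0 < G := Finset.prod_pos fun j _ => Real.rpow_pos_of_pos (by positivity) _
  have hL0 : (0:ℝ) ≤ ∏ j : Fin d, (bb (kfib d c j) : ℝ) :=
    Finset.prod_nonneg fun j _ => Nat.cast_nonneg _
  have hPpos : (0:ℝ) < ∏ j : Fin d, ((kfib d c j : ℝ)+1) :=
    Finset.prod_pos fun j _ => by positivity
  have hGsq : G^2 = (∏ j : Fin d, ((kfib d c j : ℝ)+1))⁻¹ := by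
    rw [hG, ← Finset.prod_pow, ← Finset.prod_inv_distrib]
    refine Finset.prod_congr rfl fun j _ => ?_
    have h1 : (0:ℝ) ≤ (kfib d c j : ℝ)+1 := by positivity
    rw [← Real.rpow_natCast (((kfib d c j : ℝ)+1) ^ (-(1:ℝ)/2)) 2, ← Real.rpow_mul h1,
      show (-(1:ℝ)/2) * ((2:ℕ):ℝ) = -1 by push_cast; ring, Real.rpow_neg_one]
  have hsq : (∏ j : Fin d, (bb (kfib d c j) : ℝ))^2 * (∏ j : Fin d, ((kfib d c j : ℝ)+1))
      ≤ (2:ℝ)^d * 4^N := by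
    have hprod : ∏ j : Fin d, (((bb (kfib d c j))^2 * (kfib d c j + 1) : ℕ) : ℝ)
        ≤ ∏ j : Fin d, ((2 * 4^(kfib d c j) : ℕ) : ℝ) := by
      refine Finset.prod_le_prod (fun j _ => Nat.cast_nonneg _) fun j _ => ?_
      exact_mod_cast bb_sq (kfib d c j)
    calc (∏ j : Fin d, (bb (kfib d c j) : ℝ))^2 * (∏ j : Fin d, ((kfib d c j : ℝ)+1))
        = ∏ j : Fin d, (((bb (kfib d c j))^2 * (kfib d c j + 1) : ℕ) : ℝ) := by
          rw [← Finset.prod_pow, ← Finset.prod_mul_distrib]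
          refine Finset.prod_congr rfl fun j _ => by push_cast; ring
      _ ≤ ∏ j : Fin d, ((2 * 4^(kfib d c j) : ℕ) : ℝ) := hprod
      _ = (2:ℝ)^d * 4^N := by
          rw [show (∏ j : Fin d, ((2 * 4^(kfib d c j) : ℕ) : ℝ))
            = ∏ j : Fin d, ((2:ℝ) * 4^(kfib d c j)) from Finset.prod_congr rfl fun j _ => by
              push_cast; ring]
          rw [Finset.prod_mul_distrib, Finset.prod_const, Finset.card_univ, Fintype.card_fin,
            Finset.prod_pow_eq_pow_sum]
          rw [kfib_sum]
  have hR0 : (0:ℝ) ≤ (2:ℝ)^d * 2^N * G := by positivity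
  have h1 : (∏ j : Fin d, (bb (kfib d c j) : ℝ))^2 ≤ ((2:ℝ)^d * 4^N) * G^2 := by
    rw [hGsq, ← div_eq_mul_inv]
    exact (le_div_iff₀ hPpos).2 hsq
  have hsqN : ((2:ℝ)^N)^2 = (4:ℝ)^N := by
    rw [← pow_mul, show (4:ℝ) = 2^2 by norm_num, ← pow_mul, mul_comm]
  have h2 : ((2:ℝ)^d * 4^N) * G^2 ≤ ((2:ℝ)^d * 2^N * G)^2 := by
    have hexp : ((2:ℝ)^d * 2^N * G)^2 = ((2:ℝ)^d)^2 * (4:ℝ)^N * G^2 := by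
      rw [← hsqN]; ring
    rw [hexp]
    have h2d : (1:ℝ) ≤ (2:ℝ)^d := one_le_pow₀ (by norm_num)
    have h4N : (0:ℝ) < (4:ℝ)^N := by positivity
    nlinarith [sq_nonneg G, pow_pos (show (0:ℝ) < 2 by norm_num) d]
  nlinarith [h1.trans h2, hL0, hR0]

lemma gm_am {N : ℕ} (hd3 : 3 ≤ d) (c : Fin N → Fin d) :
    ∏ j : Fin d, ((kfib d c j : ℝ)+1) ^ (-(1:ℝ)/2)
      ≤ (1/(d:ℝ)) * ∑ j : Fin d, ((kfib d c j : ℝ)+1) ^ (-(d:ℝ)/2) := by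
  have hdpos : (0:ℝ) < d := by positivity
  have hgm := Real.geom_mean_le_arith_mean_weighted (univ : Finset (Fin d))
    (fun _ => 1/(d:ℝ)) (fun j => ((kfib d c j : ℝ)+1) ^ (-(d:ℝ)/2))
    (fun _ _ => by positivity)
    (by rw [Finset.sum_const, Finset.card_univ, Fintype.card_fin, nsmul_eq_mul]; field_simp)
    (fun j _ => Real.rpow_nonneg (by positivity) _)
  have hz : ∀ j : Fin d, (((kfib d c j : ℝ)+1) ^ (-(d:ℝ)/2)) ^ (1/(d:ℝ))
      = ((kfib d c j : ℝ)+1) ^ (-(1:ℝ)/2) := by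
    intro j
    rw [← Real.rpow_mul (by positivity)]
    congr 1
    field_simp
  calc ∏ j : Fin d, ((kfib d c j : ℝ)+1) ^ (-(1:ℝ)/2)
      = ∏ j : Fin d, (((kfib d c j : ℝ)+1) ^ (-(d:ℝ)/2)) ^ (1/(d:ℝ)) :=
        Finset.prod_congr rfl fun j _ => (hz j).symm
    _ ≤ ∑ j : Fin d, (1/(d:ℝ)) * ((kfib d c j : ℝ)+1) ^ (-(d:ℝ)/2) := hgm
    _ = (1/(d:ℝ)) * ∑ j : Fin d, ((kfib d c j : ℝ)+1) ^ (-(d:ℝ)/2) := by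
        rw [Finset.mul_sum]

lemma W_diag_bound (hd3 : 3 ≤ d) (N : ℕ) :
    (W d N 0 : ℝ) ≤ (2:ℝ)^d * (d:ℝ)^d * (2*(d:ℝ))^N * ((N:ℝ)+1) ^ (-(d:ℝ)/2) := by
  have hd1 : 1 ≤ d := by omega
  have h1 : (W d N 0 : ℝ) ≤ ∑ c : Fin N → Fin d, ∏ j : Fin d, (bb (kfib d c j) : ℝ) := by
    have hc : ((W d N 0 : ℕ):ℝ)
        ≤ ((∑ c : Fin N → Fin d, ∏ j : Fin d, bb (kfib d c j) : ℕ):ℝ) :=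
      Nat.cast_le.2 (W0_le_prod d N)
    push_cast at hc
    exact hc
  have h2 : ∑ c : Fin N → Fin d, ∏ j : Fin d, (bb (kfib d c j) : ℝ)
      ≤ (2:ℝ)^d * 2^N * ∑ c : Fin N → Fin d,
        ∏ j : Fin d, ((kfib d c j : ℝ)+1) ^ (-(1:ℝ)/2) := by
    rw [Finset.mul_sum]
    exact Finset.sum_le_sum fun c _ => prod_bb_le d c
  have h3 : ∑ c : Fin N → Fin d, ∏ j : Fin d, ((kfib d c j : ℝ)+1) ^ (-(1:ℝ)/2)
      ≤ (d:ℝ)^(N+d) * ((N:ℝ)+1) ^ (-(d:ℝ)/2) := by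
    have hdpos : (0:ℝ) < d := by positivity
    calc ∑ c : Fin N → Fin d, ∏ j : Fin d, ((kfib d c j : ℝ)+1) ^ (-(1:ℝ)/2)
        ≤ ∑ c : Fin N → Fin d,
            (1/(d:ℝ)) * ∑ j : Fin d, ((kfib d c j : ℝ)+1) ^ (-(d:ℝ)/2) :=
          Finset.sum_le_sum fun c _ => gm_am d hd3 c
      _ = (1/(d:ℝ)) * ∑ j : Fin d, ∑ c : Fin N → Fin d, ((kfib d c j : ℝ)+1) ^ (-(d:ℝ)/2) := by
          rw [← Finset.mul_sum, Finset.sum_comm]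
      _ ≤ (1/(d:ℝ)) * ∑ _j : Fin d, (d:ℝ)^(N+d) * ((N:ℝ)+1) ^ (-(d:ℝ)/2) := by
          refine mul_le_mul_of_nonneg_left (Finset.sum_le_sum fun j _ => ?_) (by positivity)
          rw [TB d hd1 j N (fun k => ((k:ℝ)+1) ^ (-(d:ℝ)/2))]
          exact moment_bound d hd3 N
      _ = (d:ℝ)^(N+d) * ((N:ℝ)+1) ^ (-(d:ℝ)/2) := by
          rw [Finset.sum_const, Finset.card_univ, Fintype.card_fin, nsmul_eq_mul]
          field_simp
  have hmain : (W d N 0 : ℝ)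
      ≤ (2:ℝ)^d * 2^N * ((d:ℝ)^(N+d) * ((N:ℝ)+1) ^ (-(d:ℝ)/2)) :=
    h1.trans (h2.trans (mul_le_mul_of_nonneg_left h3 (by positivity)))
  calc (W d N 0 : ℝ)
      ≤ (2:ℝ)^d * 2^N * ((d:ℝ)^(N+d) * ((N:ℝ)+1) ^ (-(d:ℝ)/2)) := hmain
    _ = (2:ℝ)^d * (d:ℝ)^d * (2*(d:ℝ))^N * ((N:ℝ)+1) ^ (-(d:ℝ)/2) := by
        rw [pow_add, mul_pow]
        ring

/-! ### uniform heat kernel bound -/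

lemma rpow_double_bound (hd3 : 3 ≤ d) (a : ℝ) (ha : 1 ≤ a) :
    a ^ (-(d:ℝ)/2) ≤ (2:ℝ)^d * (a+1) ^ (-(d:ℝ)/2) := by
  have ha0 : (0:ℝ) < a := by linarith
  have hd0 : (0:ℝ) ≤ (d:ℝ) := by positivity
  have h1 : (a+1) ≤ 2*a := by linarith
  have h2 : (2*a)^(-(d:ℝ)/2) ≤ (a+1)^(-(d:ℝ)/2) :=
    Real.rpow_le_rpow_of_nonpos (by linarith) h1 (by linarith)
  have h3 : (2*a)^(-(d:ℝ)/2) = (2:ℝ)^(-(d:ℝ)/2) * a^(-(d:ℝ)/2) :=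
    Real.mul_rpow (by norm_num) ha0.le
  have h4 : a ^ (-(d:ℝ)/2) = (2:ℝ)^((d:ℝ)/2) * (2*a)^(-(d:ℝ)/2) := by
    rw [h3, ← mul_assoc, ← Real.rpow_add (by norm_num : (0:ℝ) < 2)]
    rw [show (d:ℝ)/2 + (-(d:ℝ)/2) = 0 by ring, Real.rpow_zero, one_mul]
  have h5 : (2:ℝ)^((d:ℝ)/2) ≤ (2:ℝ)^(d:ℝ) :=
    Real.rpow_le_rpow_of_exponent_le (by norm_num) (by linarith)
  have h6 : (2:ℝ)^(d:ℝ) = (2:ℝ)^(d:ℕ) := Real.rpow_natCast 2 d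
  have h7 : (0:ℝ) ≤ (2*a)^(-(d:ℝ)/2) := Real.rpow_nonneg (by linarith) _
  calc a ^ (-(d:ℝ)/2) = (2:ℝ)^((d:ℝ)/2) * (2*a)^(-(d:ℝ)/2) := h4
    _ ≤ (2:ℝ)^(d:ℕ) * (2*a)^(-(d:ℝ)/2) := by
        refine mul_le_mul_of_nonneg_right ?_ h7
        rw [← h6]; exact h5
    _ ≤ (2:ℝ)^(d:ℕ) * (a+1)^(-(d:ℝ)/2) :=
        mul_le_mul_of_nonneg_left h2 (by positivity)

lemma W_all_bound (hd3 : 3 ≤ d) (n : ℕ) (v : Zd d) :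
    (W d n v : ℝ) ≤ (4:ℝ)^d * (d:ℝ)^d * (2*(d:ℝ))^n * ((n:ℝ)+1) ^ (-(d:ℝ)/2) := by
  have h24 : ((2:ℝ)^d) * ((2:ℝ)^d) = (4:ℝ)^d := by
    rw [← mul_pow]; norm_num
  have h2le4 : ((2:ℝ)^d) ≤ (4:ℝ)^d := pow_le_pow_left₀ (by norm_num) (by norm_num) d
  rcases Nat.even_or_odd n with ⟨q, hq⟩ | ⟨q, hq⟩
  · subst hq
    calc (W d (q+q) v : ℝ) ≤ (W d (q+q) 0 : ℝ) := W_even_max d q v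
      _ ≤ (2:ℝ)^d * (d:ℝ)^d * (2*(d:ℝ))^(q+q) * (((q+q:ℕ):ℝ)+1) ^ (-(d:ℝ)/2) :=
          W_diag_bound d hd3 (q+q)
      _ ≤ (4:ℝ)^d * (d:ℝ)^d * (2*(d:ℝ))^(q+q) * (((q+q:ℕ):ℝ)+1) ^ (-(d:ℝ)/2) := by
          have hnn : (0:ℝ) ≤ (d:ℝ)^d * (2*(d:ℝ))^(q+q) * (((q+q:ℕ):ℝ)+1) ^ (-(d:ℝ)/2) := by
            have : (0:ℝ) ≤ (d:ℝ) := by positivity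
            positivity
          nlinarith [h2le4, hnn]
  · rw [hq, show 2*q+1 = 1+(q+q) by ring]
    have hdiag := W_diag_bound d hd3 (q+q)
    have hodd := W_odd_le d q v
    have hd0 : (0:ℝ) < (d:ℝ) := by
      have : 0 < d := by omega
      exact_mod_cast this
    have hshift : (((q+q:ℕ):ℝ)+1) ^ (-(d:ℝ)/2)
        ≤ (2:ℝ)^d * ((((1+(q+q):ℕ):ℝ))+1) ^ (-(d:ℝ)/2) := by
      have := rpow_double_bound d hd3 (((q+q:ℕ):ℝ)+1)
        (by have := Nat.cast_nonneg (α := ℝ) (q+q); linarith)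
      calc (((q+q:ℕ):ℝ)+1) ^ (-(d:ℝ)/2)
          ≤ (2:ℝ)^d * ((((q+q:ℕ):ℝ)+1)+1) ^ (-(d:ℝ)/2) := this
        _ = (2:ℝ)^d * ((((1+(q+q):ℕ):ℝ))+1) ^ (-(d:ℝ)/2) := by
            push_cast
            ring_nf
    calc (W d (1+(q+q)) v : ℝ) ≤ 2 * d * (W d (q+q) 0 : ℝ) := hodd
      _ ≤ 2 * d * ((2:ℝ)^d * (d:ℝ)^d * (2*(d:ℝ))^(q+q) * (((q+q:ℕ):ℝ)+1) ^ (-(d:ℝ)/2)) :=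
          mul_le_mul_of_nonneg_left hdiag (by positivity)
      _ = (2:ℝ)^d * (d:ℝ)^d * (2*(d:ℝ))^(1+(q+q)) * (((q+q:ℕ):ℝ)+1) ^ (-(d:ℝ)/2) := by
          ring
      _ ≤ (2:ℝ)^d * (d:ℝ)^d * (2*(d:ℝ))^(1+(q+q))
            * ((2:ℝ)^d * ((((1+(q+q):ℕ):ℝ))+1) ^ (-(d:ℝ)/2)) := by
          refine mul_le_mul_of_nonneg_left hshift (by positivity)
      _ = (4:ℝ)^d * (d:ℝ)^d * (2*(d:ℝ))^(1+(q+q)) * ((((1+(q+q):ℕ):ℝ))+1) ^ (-(d:ℝ)/2) := by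
          rw [← h24]
          ring

lemma pwalk_nonneg (n : ℕ) (x y : Zd d) : 0 ≤ pwalk d n x y := by
  rw [pwalk]
  positivity

lemma pwalk_le (hd3 : 3 ≤ d) (n : ℕ) (x y : Zd d) :
    pwalk d n x y ≤ (4:ℝ)^d * (d:ℝ)^d * ((n:ℝ)+1) ^ (-(d:ℝ)/2) := by
  have hd0 : (0:ℝ) < (d:ℝ) := by
    have : 0 < d := by omega
    exact_mod_cast this
  have hpow : (0:ℝ) < (2*(d:ℝ))^n := by positivity
  rw [pwalk, walksIn_eq, div_le_iff₀ hpow]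
  calc (W d n (y - x) : ℝ)
      ≤ (4:ℝ)^d * (d:ℝ)^d * (2*(d:ℝ))^n * ((n:ℝ)+1) ^ (-(d:ℝ)/2) := W_all_bound d hd3 n _
    _ = (4:ℝ)^d * (d:ℝ)^d * ((n:ℝ)+1) ^ (-(d:ℝ)/2) * (2*(d:ℝ))^n := by ring

lemma summable_rpow_shift (r : ℝ) (hr : r < -1) :
    Summable (fun n : ℕ => ((n:ℝ)+1) ^ r) := by
  have h := Real.summable_nat_rpow.2 hr
  have h2 := (summable_nat_add_iff 1).2 h
  refine h2.congr fun n => ?_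
  push_cast
  ring_nf

lemma summable_pwalk (hd3 : 3 ≤ d) (x y : Zd d) :
    Summable (fun n : ℕ => pwalk d n x y) := by
  have hbase : Summable (fun n : ℕ => ((n:ℝ)+1) ^ (-(3:ℝ)/2)) :=
    summable_rpow_shift (-(3:ℝ)/2) (by norm_num)
  have hmaj : Summable (fun n : ℕ => (4:ℝ)^d * (d:ℝ)^d * ((n:ℝ)+1) ^ (-(3:ℝ)/2)) :=
    hbase.mul_left _
  refine Summable.of_nonneg_of_le (fun n => pwalk_nonneg d n x y) (fun n => ?_) hmaj
  refine (pwalk_le d hd3 n x y).trans ?_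
  have hd0 : (0:ℝ) ≤ (d:ℝ) := by positivity
  refine mul_le_mul_of_nonneg_left ?_ (by positivity)
  refine Real.rpow_le_rpow_of_exponent_le (by push_cast; linarith [Nat.cast_nonneg (α := ℝ) n]) ?_
  have : (3:ℝ) ≤ (d:ℝ) := by exact_mod_cast hd3
  linarith

lemma pwalk_sum_le_one (n : ℕ) (x : Zd d) (T : Finset (Zd d)) (hd1 : 1 ≤ d) :
    ∑ y ∈ T, pwalk d n x y ≤ 1 := by
  have hpow : (0:ℝ) < (2*(d:ℝ))^n := by
    have : (0:ℝ) < (d:ℝ) := by exact_mod_cast hd1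
    positivity
  have hsum : ∑ y ∈ T, pwalk d n x y
      = (∑ y ∈ T, (walksIn d Set.univ n x y : ℝ)) / (2*(d:ℝ))^n := by
    rw [Finset.sum_div]
    rfl
  rw [hsum, div_le_one hpow]
  have h1 : ∑ y ∈ T, (walksIn d Set.univ n x y : ℝ)
      = ((∑ y ∈ T, walksIn d Set.univ n x y : ℕ):ℝ) := by push_cast; rfl
  rw [h1]
  have h2 : ∑ y ∈ T, walksIn d Set.univ n x y = ∑ v ∈ T.image (fun y => y - x), W d n v := by
    rw [Finset.sum_image (fun a _ b _ h => by
      have := congrArg (fun t => t + x) h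
      simpa using this)]
    exact Finset.sum_congr rfl fun y _ => walksIn_eq d n x y
  calc ((∑ y ∈ T, walksIn d Set.univ n x y : ℕ):ℝ)
      ≤ (((2*d)^n : ℕ):ℝ) := by
        rw [h2]
        exact_mod_cast W_sum_le d n _
    _ = (2*(d:ℝ))^n := by push_cast; ring

/-! ### telescoping tail bound -/

lemma inv_sqrt_telescope (a : ℝ) (ha : 1 ≤ a) :
    a ^ (-(3:ℝ)/2) ≤ 4 * a ^ (-(1:ℝ)/2) - 4 * (a+1) ^ (-(1:ℝ)/2) := by
  have ha0 : (0:ℝ) < a := by linarith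
  set sa := Real.sqrt a with hsa
  set sb := Real.sqrt (a+1) with hsb
  have hsa0 : 0 < sa := Real.sqrt_pos.2 ha0
  have hsb0 : 0 < sb := Real.sqrt_pos.2 (by linarith)
  have hsa2 : sa^2 = a := Real.sq_sqrt ha0.le
  have hsb2 : sb^2 = a+1 := Real.sq_sqrt (by linarith)
  have hsa1 : 1 ≤ sa := by nlinarith
  have hAm : a ^ (-(1:ℝ)/2) = sa⁻¹ := by
    rw [show (-(1:ℝ)/2) = -(1/2) by ring, Real.rpow_neg ha0.le, hsa, Real.sqrt_eq_rpow]
  have hBm : (a+1) ^ (-(1:ℝ)/2) = sb⁻¹ := by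
    rw [show (-(1:ℝ)/2) = -(1/2) by ring, Real.rpow_neg (by linarith), hsb, Real.sqrt_eq_rpow]
  have hCm : a ^ (-(3:ℝ)/2) = (a * sa)⁻¹ := by
    rw [show (-(3:ℝ)/2) = -(3/2) by ring, Real.rpow_neg ha0.le]
    congr 1
    rw [show (3:ℝ)/2 = 1 + 1/2 by ring, Real.rpow_add ha0, Real.rpow_one, hsa,
      Real.sqrt_eq_rpow]
  rw [hAm, hBm, hCm]
  have hL : (4*a*sa)^2 = 16*a^2*a := by
    rw [mul_pow, mul_pow, hsa2]
    ring
  have hR : ((4*a-1)*sb)^2 = (4*a-1)^2*(a+1) := by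
    rw [mul_pow, hsb2]
  have hsq : (4*a*sa)^2 ≤ ((4*a-1)*sb)^2 := by
    rw [hL, hR]
    nlinarith
  have h4a : (0:ℝ) ≤ 4*a*sa := by positivity
  have h4b : (0:ℝ) ≤ (4*a-1)*sb := by nlinarith
  have hkey : 4*a*sa ≤ (4*a-1)*sb := by nlinarith [hsq, h4a, h4b]
  have h2 : (4*a-1) / (a*sa) = 4*sa⁻¹ - (a*sa)⁻¹ := by
    field_simp
  have h3 : (4:ℝ)/sb ≤ (4*a-1)/(a*sa) := by
    rw [div_le_div_iff₀ hsb0 (by positivity)]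
    nlinarith [hkey]
  have h1 : (4:ℝ)*sb⁻¹ ≤ 4*sa⁻¹ - (a*sa)⁻¹ := by
    calc (4:ℝ)*sb⁻¹ = 4/sb := by ring
      _ ≤ (4*a-1)/(a*sa) := h3
      _ = 4*sa⁻¹ - (a*sa)⁻¹ := h2
  linarith

lemma tail_sum_32 (M : ℕ) (hM : 1 ≤ M) :
    ∑' n : ℕ, ((n:ℝ)+M) ^ (-(3:ℝ)/2) ≤ 4 * (M:ℝ) ^ (-(1:ℝ)/2) := by
  set u : ℕ → ℝ := fun n => ((n:ℝ)+M) ^ (-(3:ℝ)/2) with hu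
  set v : ℕ → ℝ := fun n => 4 * ((n:ℝ)+M) ^ (-(1:ℝ)/2) with hv
  have hM1 : (1:ℝ) ≤ (M:ℝ) := by exact_mod_cast hM
  have hstep : ∀ n : ℕ, u n ≤ v n - v (n+1) := by
    intro n
    have ha : (1:ℝ) ≤ (n:ℝ)+M := by
      have : (0:ℝ) ≤ (n:ℝ) := Nat.cast_nonneg n
      linarith
    have := inv_sqrt_telescope ((n:ℝ)+M) ha
    have hcast : ((n+1:ℕ):ℝ)+M = ((n:ℝ)+M)+1 := by push_cast; ring
    rw [hu, hv]
    simp only []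
    rw [hcast]
    linarith [this]
  have hv0 : ∀ n, 0 ≤ v n := by
    intro n
    have : (0:ℝ) ≤ (n:ℝ)+M := by positivity
    have := Real.rpow_nonneg this (-(1:ℝ)/2)
    rw [hv]
    positivity
  have hpartial : ∀ Mx : ℕ, ∑ n ∈ Finset.range Mx, u n ≤ v 0 - v Mx := by
    intro Mx
    induction Mx with
    | zero => simp
    | succ Mx ih =>
        rw [Finset.sum_range_succ]
        have := hstep Mx
        linarith
  have hun : ∀ n, 0 ≤ u n := fun n => Real.rpow_nonneg (by positivity) _
  have hv0val : v 0 = 4 * (M:ℝ) ^ (-(1:ℝ)/2) := by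
    rw [hv]
    norm_num
  refine Real.tsum_le_of_sum_range_le hun fun Mx => ?_
  calc ∑ n ∈ Finset.range Mx, u n ≤ v 0 - v Mx := hpartial Mx
    _ ≤ v 0 := by linarith [hv0 Mx]
    _ = 4 * (M:ℝ) ^ (-(1:ℝ)/2) := hv0val

lemma tail_partial_32 (M : ℕ) (hM : 1 ≤ M) (K : ℕ) :
    ∑ n ∈ Finset.range K, ((n:ℝ)+M) ^ (-(3:ℝ)/2) ≤ 4 * (M:ℝ) ^ (-(1:ℝ)/2) := by
  set u : ℕ → ℝ := fun n => ((n:ℝ)+M) ^ (-(3:ℝ)/2) with hu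
  set v : ℕ → ℝ := fun n => 4 * ((n:ℝ)+M) ^ (-(1:ℝ)/2) with hv
  have hstep : ∀ n : ℕ, u n ≤ v n - v (n+1) := by
    intro n
    have ha : (1:ℝ) ≤ (n:ℝ)+M := by
      have h0 : (0:ℝ) ≤ (n:ℝ) := Nat.cast_nonneg n
      have h1 : (1:ℝ) ≤ (M:ℝ) := by exact_mod_cast hM
      linarith
    have hts := inv_sqrt_telescope ((n:ℝ)+M) ha
    have hcast : ((n+1:ℕ):ℝ)+M = ((n:ℝ)+M)+1 := by push_cast; ring
    rw [hu, hv]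
    simp only []
    rw [hcast]
    linarith [hts]
  have hv0 : ∀ n, 0 ≤ v n := by
    intro n
    have h0 : (0:ℝ) ≤ (n:ℝ)+M := by positivity
    have := Real.rpow_nonneg h0 (-(1:ℝ)/2)
    rw [hv]
    positivity
  have hpartial : ∀ Mx : ℕ, ∑ n ∈ Finset.range Mx, u n ≤ v 0 - v Mx := by
    intro Mx
    induction Mx with
    | zero => simp
    | succ Mx ih =>
        rw [Finset.sum_range_succ]
        have := hstep Mx
        linarith
  have hv0val : v 0 = 4 * (M:ℝ) ^ (-(1:ℝ)/2) := by
    rw [hv]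
    norm_num
  calc ∑ n ∈ Finset.range K, u n ≤ v 0 - v K := hpartial K
    _ ≤ v 0 := by linarith [hv0 K]
    _ = 4 * (M:ℝ) ^ (-(1:ℝ)/2) := hv0val

end GreenAux

end

set_option maxHeartbeats 2000000 in
open GreenAux in
/-- if `z₁, …, z_m ∈ L·ℤ^d` have mutual ℓ∞-distance at least `(2K+1)L` and all
boxes `C_{zᵢ}` lie in a box of ℓ∞-radius `⌊C m^{1/d} L⌋` around some `z₀`, then for every
`x ∈ U = ∪ᵢ C_{zᵢ}` one has `∑_{y∈U} g(x,y) ≤ C' · m^{2/d} · L²`, with `C' = C'(d,K,C)`. -/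
theorem green_sum_over_boxes (d : ℕ) (hd : 3 ≤ d) (K : ℕ) (hK : 100 ≤ K)
    (C : ℝ) (hC : 0 < C) :
    ∃ C' : ℝ, 0 < C' ∧
      ∀ (L : ℕ), 1 ≤ L → ∀ (m : ℕ), 1 ≤ m → ∀ (z : Fin m → Zd d) (z₀ : Zd d),
        (∀ i j, (L : ℤ) ∣ z i j) →
        (Pairwise fun i j => (2 * K + 1) * L ≤ normInf d (z i - z j)) →
        (∀ i, ∀ x ∈ boxC d (z i) L, (normInf d (x - z₀) : ℝ) ≤ ⌊C * (m : ℝ) ^ (1 / (d : ℝ)) * L⌋₊) →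
        ∀ x ∈ Finset.univ.biUnion fun i => boxC d (z i) L,
          ∑ y ∈ Finset.univ.biUnion fun i => boxC d (z i) L, green d x y ≤
            C' * (m : ℝ) ^ (2 / (d : ℝ)) * (L : ℝ) ^ 2 := by
  classical
  have hd1 : 1 ≤ d := by omega
  have hdR : (0:ℝ) < (d:ℝ) := by exact_mod_cast (show 0 < d by omega)
  set A : ℝ := (4:ℝ)^d * (d:ℝ)^d with hA
  have hA0 : 0 < A := by positivity
  refine ⟨(1 + 8*A) * (4*C+1)^2, by positivity, ?_⟩
  intro L hL m hm z z₀ _hdvd _hsep hcont x hx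
  set R : ℕ := ⌊C * (m:ℝ) ^ (1/(d:ℝ)) * L⌋₊ with hR
  set U := Finset.univ.biUnion (fun i => boxC d (z i) L) with hUdef
  -- coordinatewise bounds
  have hnorm : ∀ y ∈ U, ∀ j : Fin d, (y j - z₀ j).natAbs ≤ R := by
    intro y hy j
    obtain ⟨i, _, hyi⟩ := Finset.mem_biUnion.1 hy
    have h1 : (normInf d (y - z₀) : ℝ) ≤ (R:ℝ) := hcont i y hyi
    have h2 : normInf d (y - z₀) ≤ R := by exact_mod_cast h1
    refine le_trans ?_ h2
    exact Finset.le_sup (f := fun i => ((y - z₀) i).natAbs) (Finset.mem_univ j)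
  set Box : Finset (Zd d) :=
    Finset.Icc (fun j => x j - (2*R:ℕ)) (fun j => x j + (2*R:ℕ)) with hBox
  have hUB : ∀ y ∈ U, y ∈ Box := by
    intro y hy
    rw [hBox, Finset.mem_Icc]
    have hyj := hnorm y hy
    have hxj := hnorm x hx
    constructor
    · intro j
      have h1 := hyj j
      have h2 := hxj j
      show x j - ((2*R : ℕ):ℤ) ≤ y j
      omega
    · intro j
      have h1 := hyj j
      have h2 := hxj j
      show y j ≤ x j + ((2*R : ℕ):ℤ)
      omega
  have hcardBox : Box.card = (4*R+1)^d := by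
    rw [hBox, Pi.card_Icc]
    have hj : ∀ j : Fin d, (Finset.Icc (x j - (2*R:ℕ)) (x j + (2*R:ℕ))).card = 4*R+1 := by
      intro j
      rw [Int.card_Icc]
      omega
    rw [Finset.prod_congr rfl (fun j _ => hj j), Finset.prod_const, Finset.card_univ,
      Fintype.card_fin]
  set N₀ : ℕ := (4*R+1)^2 with hN0
  set BB : ℝ := ((4*R+1:ℕ):ℝ)^d * A with hBBdef
  have hBB0 : 0 < BB := by positivity
  -- pointwise comparison
  have hgle : ∀ n : ℕ, ∑ y ∈ U, pwalk d n x y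
      ≤ (if n < N₀ then (1:ℝ) else BB * ((n:ℝ)+1) ^ (-(d:ℝ)/2)) := by
    intro n
    split
    · exact pwalk_sum_le_one d n x U hd1
    · calc ∑ y ∈ U, pwalk d n x y
          ≤ ∑ y ∈ Box, pwalk d n x y :=
            Finset.sum_le_sum_of_subset_of_nonneg (fun y hy => hUB y hy)
              (fun y _ _ => pwalk_nonneg d n x y)
        _ ≤ ∑ _y ∈ Box, A * ((n:ℝ)+1) ^ (-(d:ℝ)/2) :=
            Finset.sum_le_sum fun y _ => pwalk_le d hd n x y
        _ = (Box.card : ℝ) * (A * ((n:ℝ)+1) ^ (-(d:ℝ)/2)) := by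
            rw [Finset.sum_const, nsmul_eq_mul]
        _ = BB * ((n:ℝ)+1) ^ (-(d:ℝ)/2) := by
            rw [hcardBox, hBBdef]
            push_cast
            ring
  have hsummb : ∀ y : Zd d, Summable (fun n => pwalk d n x y) :=
    fun y => summable_pwalk d hd x y
  have hswap : ∑ y ∈ U, green d x y = ∑' n : ℕ, ∑ y ∈ U, pwalk d n x y := by
    simp only [green]
    exact (Summable.tsum_finsetSum (fun y _ => hsummb y)).symm
  have hgsummable : Summable (fun n => ∑ y ∈ U, pwalk d n x y) :=
    summable_sum (fun y _ => hsummb y)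
  have hbase : Summable (fun n : ℕ => ((n:ℝ)+1) ^ (-(d:ℝ)/2)) := by
    refine summable_rpow_shift (-(d:ℝ)/2) ?_
    have : (3:ℝ) ≤ (d:ℝ) := by exact_mod_cast hd
    linarith
  have htail_summable : Summable (fun n : ℕ => BB * (((n:ℝ)+(N₀:ℝ))+1) ^ (-(d:ℝ)/2)) := by
    have hshift := (summable_nat_add_iff N₀).2 hbase
    refine Summable.mul_left BB (hshift.congr fun n => ?_)
    push_cast
    ring_nf
  set h : ℕ → ℝ := fun n => if n < N₀ then (1:ℝ) else BB * ((n:ℝ)+1) ^ (-(d:ℝ)/2) with hh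
  have hh_summable : Summable h := by
    rw [← summable_nat_add_iff N₀]
    refine htail_summable.congr fun n => ?_
    simp only [hh]
    rw [if_neg (by omega)]
    push_cast
    ring_nf
  have hbound : ∑' n : ℕ, ∑ y ∈ U, pwalk d n x y ≤ ∑' n, h n :=
    Summable.tsum_le_tsum hgle hgsummable hh_summable
  -- evaluate tsum h
  have hsplit : (∑ i ∈ Finset.range N₀, h i) + (∑' n : ℕ, h (n + N₀)) = ∑' n, h n :=
    Summable.sum_add_tsum_nat_add N₀ hh_summable
  have hhead : ∑ i ∈ Finset.range N₀, h i = (N₀:ℝ) := by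
    have hone : ∀ i ∈ Finset.range N₀, h i = 1 := by
      intro i hi
      simp only [hh]
      rw [if_pos (Finset.mem_range.1 hi)]
    rw [Finset.sum_congr rfl hone, Finset.sum_const, Finset.card_range, nsmul_eq_mul, mul_one]
  set M : ℕ := N₀ + 1 with hM
  have hM1 : 1 ≤ M := by omega
  have hMR : (1:ℝ) ≤ (M:ℝ) := by exact_mod_cast hM1
  have hMpos : (0:ℝ) < (M:ℝ) := by linarith
  have htail : ∑' n : ℕ, h (n + N₀)
      ≤ BB * ((M:ℝ) ^ ((3-(d:ℝ))/2) * (4 * (M:ℝ) ^ (-(1:ℝ)/2))) := by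
    refine Real.tsum_le_of_sum_range_le (fun n => ?_) (fun K' => ?_)
    · simp only [hh]
      rw [if_neg (by omega)]
      positivity
    · have hterm : ∀ n : ℕ, h (n + N₀)
          ≤ BB * ((M:ℝ) ^ ((3-(d:ℝ))/2) * ((n:ℝ)+M) ^ (-(3:ℝ)/2)) := by
        intro n
        simp only [hh]
        rw [if_neg (by omega)]
        have hx0 : (0:ℝ) < (n:ℝ)+M := by positivity
        have hxM : (M:ℝ) ≤ (n:ℝ)+M := by
          have : (0:ℝ) ≤ (n:ℝ) := Nat.cast_nonneg n
          linarith
        have hcast : ((n+N₀:ℕ):ℝ)+1 = (n:ℝ)+M := by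
          rw [hM]
          push_cast
          ring
        rw [hcast]
        have hdecomp : ((n:ℝ)+M) ^ (-(d:ℝ)/2)
            = ((n:ℝ)+M) ^ ((3-(d:ℝ))/2) * ((n:ℝ)+M) ^ (-(3:ℝ)/2) := by
          rw [← Real.rpow_add hx0]
          congr 1
          ring
        have hbasecmp : ((n:ℝ)+M) ^ ((3-(d:ℝ))/2) ≤ (M:ℝ) ^ ((3-(d:ℝ))/2) := by
          refine Real.rpow_le_rpow_of_nonpos hMpos hxM ?_
          have : (3:ℝ) ≤ (d:ℝ) := by exact_mod_cast hd
          linarith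
        rw [hdecomp]
        have hnn : (0:ℝ) ≤ ((n:ℝ)+M) ^ (-(3:ℝ)/2) := Real.rpow_nonneg hx0.le _
        refine mul_le_mul_of_nonneg_left ?_ hBB0.le
        exact mul_le_mul_of_nonneg_right hbasecmp hnn
      calc ∑ n ∈ Finset.range K', h (n + N₀)
          ≤ ∑ n ∈ Finset.range K', BB * ((M:ℝ) ^ ((3-(d:ℝ))/2) * ((n:ℝ)+M) ^ (-(3:ℝ)/2)) :=
            Finset.sum_le_sum fun n _ => hterm n
        _ = BB * (M:ℝ) ^ ((3-(d:ℝ))/2) * ∑ n ∈ Finset.range K', ((n:ℝ)+M) ^ (-(3:ℝ)/2) := by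
            rw [Finset.mul_sum]
            refine Finset.sum_congr rfl fun n _ => by ring
        _ ≤ BB * (M:ℝ) ^ ((3-(d:ℝ))/2) * (4 * (M:ℝ) ^ (-(1:ℝ)/2)) := by
            refine mul_le_mul_of_nonneg_left (tail_partial_32 M hM1 K') ?_
            positivity
        _ = BB * ((M:ℝ) ^ ((3-(d:ℝ))/2) * (4 * (M:ℝ) ^ (-(1:ℝ)/2))) := by ring
  -- simplify the tail bound
  set t : ℝ := ((4*R+1:ℕ):ℝ) with ht
  have ht1 : (1:ℝ) ≤ t := by
    rw [ht]
    exact_mod_cast Nat.succ_le_of_lt (by omega)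
  have ht0 : (0:ℝ) < t := by linarith
  have htailval : BB * ((M:ℝ) ^ ((3-(d:ℝ))/2) * (4 * (M:ℝ) ^ (-(1:ℝ)/2))) ≤ 4 * A * t^2 := by
    have hM2 : (M:ℝ) ^ ((3-(d:ℝ))/2) * (M:ℝ) ^ (-(1:ℝ)/2) = (M:ℝ) ^ ((2-(d:ℝ))/2) := by
      rw [← Real.rpow_add hMpos]
      congr 1
      ring
    have hMge : (t^2 : ℝ) ≤ (M:ℝ) := by
      rw [hM, hN0, ht]
      push_cast
      nlinarith [show (0:ℝ) ≤ ((R:ℕ):ℝ) from Nat.cast_nonneg R]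
    have hexp_nonpos : ((2-(d:ℝ))/2) ≤ 0 := by
      have : (3:ℝ) ≤ (d:ℝ) := by exact_mod_cast hd
      linarith
    have hMle : (M:ℝ) ^ ((2-(d:ℝ))/2) ≤ (t^2) ^ ((2-(d:ℝ))/2) :=
      Real.rpow_le_rpow_of_nonpos (by positivity) hMge hexp_nonpos
    have htsq : (t^2 : ℝ) ^ ((2-(d:ℝ))/2) = t ^ ((2:ℝ)-(d:ℝ)) := by
      rw [← Real.rpow_natCast t 2, ← Real.rpow_mul ht0.le]
      congr 1
      push_cast
      ring
    have hBBt : BB = t^(d:ℕ) * A := by rw [hBBdef, ht]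
    have hfinal : t^(d:ℕ) * t ^ ((2:ℝ)-(d:ℝ)) = t^2 := by
      rw [← Real.rpow_natCast t d, ← Real.rpow_add ht0, ← Real.rpow_natCast t 2]
      congr 1
      push_cast
      ring
    calc BB * ((M:ℝ) ^ ((3-(d:ℝ))/2) * (4 * (M:ℝ) ^ (-(1:ℝ)/2)))
        = 4 * BB * ((M:ℝ) ^ ((3-(d:ℝ))/2) * (M:ℝ) ^ (-(1:ℝ)/2)) := by ring
      _ = 4 * BB * (M:ℝ) ^ ((2-(d:ℝ))/2) := by rw [hM2]
      _ ≤ 4 * BB * (t^2) ^ ((2-(d:ℝ))/2) := by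
          refine mul_le_mul_of_nonneg_left hMle ?_
          positivity
      _ = 4 * (t^(d:ℕ) * A) * (t ^ ((2:ℝ)-(d:ℝ))) := by rw [htsq, hBBt]
      _ = 4 * A * (t^(d:ℕ) * t ^ ((2:ℝ)-(d:ℝ))) := by ring
      _ = 4 * A * t^2 := by rw [hfinal]
  -- put everything together
  have hN0t : ((N₀:ℕ):ℝ) = t^2 := by
    rw [hN0, ht]
    push_cast
    ring
  have htotal : ∑ y ∈ U, green d x y ≤ (1 + 4*A) * t^2 := by
    rw [hswap]
    calc ∑' n : ℕ, ∑ y ∈ U, pwalk d n x y ≤ ∑' n, h n := hbound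
      _ = (∑ i ∈ Finset.range N₀, h i) + (∑' n : ℕ, h (n + N₀)) := hsplit.symm
      _ ≤ t^2 + 4 * A * t^2 := by
          rw [hhead, hN0t]
          exact add_le_add_right (htail.trans htailval) _
      _ = (1 + 4*A) * t^2 := by ring
  -- bound t
  have hm1 : (1:ℝ) ≤ (m:ℝ) := by exact_mod_cast hm
  have hL1 : (1:ℝ) ≤ (L:ℝ) := by exact_mod_cast hL
  have hrp1 : (1:ℝ) ≤ (m:ℝ) ^ (1/(d:ℝ)) := by
    have := Real.rpow_le_rpow (by norm_num : (0:ℝ) ≤ 1) hm1 (by positivity : (0:ℝ) ≤ 1/(d:ℝ))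
    rwa [Real.one_rpow] at this
  have hmL1 : (1:ℝ) ≤ (m:ℝ) ^ (1/(d:ℝ)) * (L:ℝ) := by nlinarith
  have hRle : ((R:ℕ):ℝ) ≤ C * (m:ℝ) ^ (1/(d:ℝ)) * (L:ℝ) := by
    rw [hR]
    exact Nat.floor_le (by positivity)
  have htle : t ≤ (4*C+1) * ((m:ℝ) ^ (1/(d:ℝ)) * (L:ℝ)) := by
    rw [ht]
    push_cast
    nlinarith [hRle, hmL1, hC.le]
  have htsq2 : t^2 ≤ (4*C+1)^2 * ((m:ℝ) ^ (1/(d:ℝ)) * (L:ℝ))^2 := by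
    have h0 : (0:ℝ) ≤ (4*C+1) * ((m:ℝ) ^ (1/(d:ℝ)) * (L:ℝ)) := by positivity
    calc t^2 ≤ ((4*C+1) * ((m:ℝ) ^ (1/(d:ℝ)) * (L:ℝ)))^2 := by nlinarith [htle, ht0.le]
      _ = (4*C+1)^2 * ((m:ℝ) ^ (1/(d:ℝ)) * (L:ℝ))^2 := by ring
  have hm2d : ((m:ℝ) ^ (1/(d:ℝ)))^2 = (m:ℝ) ^ (2/(d:ℝ)) := by
    rw [← Real.rpow_natCast ((m:ℝ) ^ (1/(d:ℝ))) 2, ← Real.rpow_mul (by positivity)]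
    congr 1
    push_cast
    ring
  calc ∑ y ∈ U, green d x y ≤ (1 + 4*A) * t^2 := htotal
    _ ≤ (1 + 4*A) * ((4*C+1)^2 * ((m:ℝ) ^ (1/(d:ℝ)) * (L:ℝ))^2) :=
        mul_le_mul_of_nonneg_left htsq2 (by positivity)
    _ = (1 + 4*A) * (4*C+1)^2 * (m:ℝ) ^ (2/(d:ℝ)) * (L:ℝ)^2 := by
        rw [mul_pow, hm2d]
        ring
    _ ≤ (1 + 8*A) * (4*C+1)^2 * (m:ℝ) ^ (2/(d:ℝ)) * (L:ℝ)^2 := by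
        have hfac : (0:ℝ) ≤ (4*C+1)^2 * (m:ℝ) ^ (2/(d:ℝ)) * (L:ℝ)^2 := by positivity
        nlinarith [hA0, hfac]
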